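/- arXiv:1805.10120 — 3 statements merged into one kernel-verified Lean document; each statement's English description precedes it below -/
import Mathlib

section
/- Let (β_k) and (α_k) be sequences of nonnegative reals with Σ_{k} α_k = ∞ and Σ_k α_k β_k < ∞. If moreover there is M > 0 such that |β_{k+1} - β_k| ≤ M α_k for all k, then lim_{k→∞} β_k = 0. -/
open Filter Topology

/-- Telescoping bound: `β m - β p ≤ M * ∑_{j ∈ [m,p)} α j`. -/
lemma aux_telescope (α β : ℕ → ℝ) (M : ℝ)
    (hstep : ∀ k, |β (k + 1) - β k| ≤ M * α k) :
    ∀ m p, m ≤ p → β m - β p ≤ M * ∑ j ∈ Finset.Ico m p, α j := by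
  intro m p hmp
  induction p, hmp using Nat.le_induction with
  | base => simp
  | succ p hmp ih =>
    rw [Finset.sum_Ico_succ_top hmp, mul_add]
    have h1 : β p - β (p + 1) ≤ M * α p := by
      have := hstep p
      have := abs_le.1 this
      linarith [this.1]
    linarith

/-- Frequently `β` is below any positive threshold. -/
lemma aux_freq (α β : ℕ → ℝ) (hαnn : ∀ k, 0 ≤ α k)
    (hαdiv : ¬ Summable α) (hsum : Summable fun k => α k * β k) :
    ∀ c : ℝ, 0 < c → ∀ m : ℕ, ∃ p, m ≤ p ∧ β p < c := by
  intro c hc m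
  by_contra h
  push_neg at h
  apply hαdiv
  rw [← summable_nat_add_iff m]
  have hs : Summable fun j => c⁻¹ * (α (j + m) * β (j + m)) :=
    (((summable_nat_add_iff m).2 hsum)).mul_left _
  refine Summable.of_nonneg_of_le (fun j => hαnn _) (fun j => ?_) hs
  have hb : c ≤ β (j + m) := h (j + m) (Nat.le_add_left m j)
  have := mul_le_mul_of_nonneg_left hb (hαnn (j + m))
  calc α (j + m) = c⁻¹ * (α (j + m) * c) := by field_simp
    _ ≤ c⁻¹ * (α (j + m) * β (j + m)) := by
        apply mul_le_mul_of_nonneg_left _ (inv_nonneg.2 hc.le)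
        exact this

/-- Alber–Iusem–Solodov lemma: if `Σ α_k = ∞`, `Σ α_k β_k < ∞` and
`|β_{k+1} - β_k| ≤ M α_k`, then `β_k → 0`. -/
theorem tendsto_zero_of_summable_mul (α β : ℕ → ℝ) (M : ℝ) (hM : 0 < M)
    (hαnn : ∀ k, 0 ≤ α k) (hβnn : ∀ k, 0 ≤ β k)
    (hαdiv : ¬ Summable α)
    (hsum : Summable fun k => α k * β k)
    (hstep : ∀ k, |β (k + 1) - β k| ≤ M * α k) :
    Tendsto β atTop (𝓝 0) := by
  rw [Metric.tendsto_atTop]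
  intro ε hε
  -- tail sums tend to 0
  set δ : ℝ := ε ^ 2 / (4 * M) with hδdef
  have hδ : 0 < δ := by positivity
  have htail : Tendsto (fun i => ∑' k, (α (k + i) * β (k + i))) atTop (𝓝 0) :=
    tendsto_sum_nat_add (fun k => α k * β k)
  obtain ⟨N, hN⟩ := (htail.eventually (gt_mem_nhds hδ)).exists
  refine ⟨N, fun m hm => ?_⟩
  rw [Real.dist_eq, sub_zero, abs_of_nonneg (hβnn m)]
  by_contra hge
  push_neg at hge
  -- find first p ≥ m with β p < ε/2
  obtain ⟨q, hq, hqlt⟩ := aux_freq α β hαnn hαdiv hsum (ε / 2) (by linarith) m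
  have hex : ∃ p, m ≤ p ∧ β p < ε / 2 := ⟨q, hq, hqlt⟩
  classical
  set p := Nat.find hex with hp
  obtain ⟨hmp, hpβ⟩ : m ≤ p ∧ β p < ε / 2 := Nat.find_spec hex
  -- on the interval [m, p), β stays ≥ ε/2
  have hmid : ∀ j, m ≤ j → j < p → ε / 2 ≤ β j := by
    intro j hmj hjp
    have := Nat.find_min hex hjp
    push_neg at this
    exact this hmj
  -- lower bound on the alpha-sum over [m, p)
  have h1 : ε / 2 ≤ M * ∑ j ∈ Finset.Ico m p, α j := by
    have := aux_telescope α β M hstep m p hmp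
    linarith
  have hA : ε / (2 * M) ≤ ∑ j ∈ Finset.Ico m p, α j := by
    rw [div_le_iff₀ (by positivity)]
    linarith [h1]
  -- lower bound on the weighted sum
  have h2 : δ ≤ ∑ j ∈ Finset.Ico m p, α j * β j := by
    have hle : ∀ j ∈ Finset.Ico m p, α j * (ε / 2) ≤ α j * β j := by
      intro j hj
      rw [Finset.mem_Ico] at hj
      exact mul_le_mul_of_nonneg_left (hmid j hj.1 hj.2) (hαnn j)
    calc δ = (ε / (2 * M)) * (ε / 2) := by
            rw [hδdef]; field_simp; ring
      _ ≤ (∑ j ∈ Finset.Ico m p, α j) * (ε / 2) :=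
            mul_le_mul_of_nonneg_right hA (by linarith)
      _ = ∑ j ∈ Finset.Ico m p, α j * (ε / 2) := by rw [Finset.sum_mul]
      _ ≤ ∑ j ∈ Finset.Ico m p, α j * β j := Finset.sum_le_sum hle
  -- upper bound via the tail sum
  have hsumN : Summable fun k => α (k + N) * β (k + N) := (summable_nat_add_iff N).2 hsum
  have h3 : ∑ j ∈ Finset.Ico m p, α j * β j ≤ ∑' k, α (k + N) * β (k + N) := by
    have hsub : ∑ j ∈ Finset.Ico m p, α j * β j ≤ ∑ j ∈ Finset.Ico N p, α j * β j := by
      apply Finset.sum_le_sum_of_subset_of_nonneg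
      · apply Finset.Ico_subset_Ico (hm) le_rfl
      · intro j _ _; exact mul_nonneg (hαnn j) (hβnn j)
    have heq : ∑ j ∈ Finset.Ico N p, α j * β j
        = ∑ k ∈ Finset.range (p - N), α (k + N) * β (k + N) := by
      rw [Finset.sum_Ico_eq_sum_range]
      refine Finset.sum_congr rfl fun k _ => ?_
      rw [add_comm N k]
    have hle2 : ∑ k ∈ Finset.range (p - N), α (k + N) * β (k + N)
        ≤ ∑' k, α (k + N) * β (k + N) :=
      Summable.sum_le_tsum _ (fun k _ => mul_nonneg (hαnn _) (hβnn _)) hsumN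
    linarith [hsub, heq ▸ hle2]
  linarith [hN, h2, h3]
end

section
/- Let σ² ∈ [0, 1/2), L > 0, α = σ²/L, and define t_0 = 0 and recursively β_k = (α(1-σ²) + √(α²(1-σ²)² + 4α(1-σ²) t_{k-1}))/2, t_k = t_{k-1} + β_k for k ≥ 1. Then t_k ≥ k² σ⁴ (1-σ²) / (4L) for all k ≥ 1. -/
/-- Growth estimate for the accelerated method's coefficients:
`t_k ≥ k² σ⁴ (1 - σ²) / (4L)`, where `s` denotes `σ²`. -/
theorem accel_coeff_growth (s L : ℝ) (hs0 : 0 ≤ s) (hs : s < 1 / 2) (hL : 0 < L)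
    (α : ℝ) (hα : α = s / L) (t β : ℕ → ℝ) (ht0 : t 0 = 0)
    (hβ : ∀ k : ℕ, β (k + 1) =
      (α * (1 - s) + Real.sqrt (α ^ 2 * (1 - s) ^ 2 + 4 * α * (1 - s) * t k)) / 2)
    (ht : ∀ k : ℕ, t (k + 1) = t k + β (k + 1)) :
    ∀ k : ℕ, 1 ≤ k → (k : ℝ) ^ 2 * s ^ 2 * (1 - s) / (4 * L) ≤ t k := by
  have hα0 : 0 ≤ α := by rw [hα]; positivity
  have h1s : 0 < 1 - s := by linarith
  set c := α * (1 - s) with hc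
  have hc0 : 0 ≤ c := mul_nonneg hα0 h1s.le
  have key : ∀ k : ℕ, c * (k : ℝ) ^ 2 / 4 ≤ t k := by
    intro k
    induction k with
    | zero => simp [ht0]
    | succ n ih =>
      have hn0 : (0 : ℝ) ≤ (n : ℝ) := Nat.cast_nonneg n
      have htn0 : 0 ≤ t n := le_trans (by positivity) ih
      have harg : (n : ℝ) ^ 2 * c ^ 2 ≤ α ^ 2 * (1 - s) ^ 2 + 4 * α * (1 - s) * t n := by
        have h1 : α ^ 2 * (1 - s) ^ 2 = c ^ 2 := by ring
        have h2 : (n : ℝ) ^ 2 * c ^ 2 ≤ 4 * c * (t n) := by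
          have := mul_le_mul_of_nonneg_left ih (by positivity : (0 : ℝ) ≤ 4 * c)
          nlinarith
        nlinarith [sq_nonneg c]
      have hsqrt : (n : ℝ) * c ≤ Real.sqrt (α ^ 2 * (1 - s) ^ 2 + 4 * α * (1 - s) * t n) := by
        have := Real.sqrt_le_sqrt harg
        calc (n : ℝ) * c = Real.sqrt (((n : ℝ) * c) ^ 2) := by
              rw [Real.sqrt_sq (by positivity)]
          _ ≤ _ := by
              rw [show ((n : ℝ) * c) ^ 2 = (n : ℝ) ^ 2 * c ^ 2 by ring]
              exact this
      have := ht n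
      rw [this, hβ n]
      push_cast
      nlinarith [hsqrt, ih]
  intro k _
  have h := key k
  have hss : s ^ 2 ≤ s := by nlinarith
  have : (k : ℝ) ^ 2 * s ^ 2 * (1 - s) / (4 * L) ≤ c * (k : ℝ) ^ 2 / 4 := by
    rw [hc, hα]
    rw [div_le_div_iff₀ (by positivity) (by norm_num)]
    have hk2 : (0 : ℝ) ≤ (k : ℝ) ^ 2 := by positivity
    have : (k : ℝ) ^ 2 * s ^ 2 * (1 - s) ≤ (k : ℝ) ^ 2 * s * (1 - s) := by
      nlinarith [mul_nonneg hk2 (mul_nonneg (sub_nonneg.2 hss) h1s.le)]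
    calc (k : ℝ) ^ 2 * s ^ 2 * (1 - s) * 4 ≤ (k : ℝ) ^ 2 * s * (1 - s) * 4 := by linarith
      _ = s / L * (1 - s) * (k : ℝ) ^ 2 * (4 * L) := by field_simp
  linarith
end

section
/- Let g be proper closed convex on ℝⁿ, f convex differentiable, σ ∈ [0,1), α > 0, x̃ ∈ ℝⁿ, and suppose w̄ ∈ ∂_{ε̄} g(x̄), ∇f(x̃) ∈ ∂_ε f(x̄) with ‖α(w̄ + ∇f(x̃)) + x̄ - x̃‖² + 2α(ε̄ + ε) ≤ σ²(‖x̄ - x̃‖² + ‖α(w̄ + ∇f(x̃))‖²). Define the affine function ℓ(x) := (f+g)(x̄) + ⟨w̄ + ∇f(x̃), x - x̄⟩ - ε̄ - ε. Then for all x ∈ ℝⁿ: ℓ(x) + (1/(2α(1-σ²)))‖x - x̃‖² ≥ (f+g)(x̄) + ((1-2σ²)/(2α))‖x̄ - x̃‖². -/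
open RealInnerProductSpace

lemma accel_aux (α σ N1 N2 N3 I1 I2 e : ℝ) (hα : 0 < α) (hσ0 : 0 ≤ σ) (hσ1 : σ < 1)
    (he : 0 ≤ e) (hN2 : 0 ≤ N2)
    (key : 0 ≤ N1 + 2 * (α * (1 - σ ^ 2)) * I1 + (α * (1 - σ ^ 2)) ^ 2 * N3)
    (herr : α ^ 2 * N3 + 2 * α * I2 + N2 + 2 * α * e ≤ σ ^ 2 * (N2 + α ^ 2 * N3)) :
    (1 - 2 * σ ^ 2) / (2 * α) * N2 + e + I2 ≤ I1 + 1 / (2 * α * (1 - σ ^ 2)) * N1 := by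
  have hβ : 0 < 1 - σ ^ 2 := by nlinarith
  rw [div_mul_eq_mul_div, one_div, ← sub_nonneg]
  have h1 : I1 + (2 * α * (1 - σ ^ 2))⁻¹ * N1 - ((1 - 2 * σ ^ 2) * N2 / (2 * α) + e + I2)
      = ((N1 + 2 * (α * (1 - σ ^ 2)) * I1 + (α * (1 - σ ^ 2)) ^ 2 * N3)
          + (1 - σ^2) * (σ ^ 2 * (N2 + α ^ 2 * N3) - (α ^ 2 * N3 + 2 * α * I2 + N2 + 2 * α * e))
          + (1 - σ^2) * σ ^ 2 * N2) / (2 * α * (1 - σ ^ 2)) := by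
    field_simp
    ring
  rw [h1]
  apply div_nonneg _ (by positivity)
  have := sub_nonneg.mpr herr
  positivity

/-- Key inequality for the accelerated method (Lemma 8 of the paper):
the linear approximation `ℓ` plus the quadratic regularization dominates
`(f+g)(x̄) + ((1-2σ²)/(2α))‖x̄ - x̃‖²`. -/
theorem accel_linear_approx_ineq (n : ℕ)
    (f g : EuclideanSpace ℝ (Fin n) → ℝ)
    (hg : ConvexOn ℝ Set.univ g) (hgc : LowerSemicontinuous g)
    (hf : ConvexOn ℝ Set.univ f) (hdiff : Differentiable ℝ f)
    (σ α : ℝ) (hσ0 : 0 ≤ σ) (hσ1 : σ < 1) (hα : 0 < α)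
    (εb ε : ℝ) (hεb : 0 ≤ εb) (hε : 0 ≤ ε)
    (xt xb wb : EuclideanSpace ℝ (Fin n))
    (hwb : ∀ y, g xb + ⟪wb, y - xb⟫ - εb ≤ g y)
    (hgrad : ∀ y, f xb + ⟪gradient f xt, y - xb⟫ - ε ≤ f y)
    (herr : ‖α • (wb + gradient f xt) + xb - xt‖ ^ 2 + 2 * α * (εb + ε) ≤
      σ ^ 2 * (‖xb - xt‖ ^ 2 + ‖α • (wb + gradient f xt)‖ ^ 2)) :
    ∀ x, (f xb + g xb) + (1 - 2 * σ ^ 2) / (2 * α) * ‖xb - xt‖ ^ 2 ≤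
      ((f xb + g xb) + ⟪wb + gradient f xt, x - xb⟫ - εb - ε) +
        (1 / (2 * α * (1 - σ ^ 2))) * ‖x - xt‖ ^ 2 := by
  intro x
  set v := wb + gradient f xt with hv
  have hβ : 0 < 1 - σ ^ 2 := by nlinarith
  -- expansion of the nonnegative square
  have key : (0:ℝ) ≤ ‖x - xt‖ ^ 2 + 2 * (α * (1 - σ ^ 2)) * ⟪v, x - xt⟫
      + (α * (1 - σ ^ 2)) ^ 2 * ‖v‖ ^ 2 := by
    have h0 : (0:ℝ) ≤ ‖(x - xt) + (α * (1 - σ ^ 2)) • v‖ ^ 2 := sq_nonneg _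
    rw [norm_add_sq_real, real_inner_smul_right, norm_smul, mul_pow,
      Real.norm_eq_abs, sq_abs] at h0
    rw [real_inner_comm]
    linarith [h0]
  -- expansion of herr
  have herr' : α ^ 2 * ‖v‖ ^ 2 + 2 * α * ⟪v, xb - xt⟫ + ‖xb - xt‖ ^ 2 + 2 * α * (εb + ε)
      ≤ σ ^ 2 * (‖xb - xt‖ ^ 2 + α ^ 2 * ‖v‖ ^ 2) := by
    have h0 := herr
    rw [add_sub_assoc, norm_add_sq_real, real_inner_smul_left, norm_smul, mul_pow,
      Real.norm_eq_abs, sq_abs] at h0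
    linarith [h0]
  -- rewrite the inner product
  have hx : ⟪v, x - xb⟫ = ⟪v, x - xt⟫ - ⟪v, xb - xt⟫ := by
    rw [← inner_sub_right]
    congr 1
    abel
  rw [hx]
  have := accel_aux α σ (‖x - xt‖ ^ 2) (‖xb - xt‖ ^ 2) (‖v‖ ^ 2)
    (⟪v, x - xt⟫) (⟪v, xb - xt⟫) (εb + ε) hα hσ0 hσ1 (by linarith) (by positivity)
    key herr'
  linarith
end
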